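/- Let X be a Banach space, T ∈ L(X) with finite ascent p(T) < ∞, and F ∈ L(X) a power finite rank operator with F ∈ comm_w(T). Then T + F has finite ascent p(T+F) < ∞. -/

import Mathlib

namespace FAP

variable {R : Type*} [Ring R]

def Words (a b : R) (n : ℕ) : Set R := {x | ∃ i j : ℕ, i + j = n ∧ x = a ^ i * b ^ j}

theorem raba {a b : R} (h4 : Commute (a*b) a) : a*(b*a) = a*(a*b) := by
  rw [← mul_assoc]; exact h4.eq

theorem rbaa {a b : R} (h2 : Commute (b*a) a) (h4 : Commute (a*b) a) :
    b*(a*a) = a*(a*b) := by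
  calc b*(a*a) = (b*a)*a := (mul_assoc _ _ _).symm
    _ = a*(b*a) := h2.eq
    _ = a*(a*b) := raba h4

theorem rbab {a b : R} (h3 : Commute (a*b) b) : b*(a*b) = a*(b*b) := by
  calc b*(a*b) = (a*b)*b := h3.eq.symm
    _ = a*(b*b) := mul_assoc _ _ _

theorem rbba {a b : R} (h1 : Commute (b*a) b) (h3 : Commute (a*b) b) :
    b*(b*a) = a*(b*b) := by
  calc b*(b*a) = (b*a)*b := h1.eq.symm
    _ = b*(a*b) := mul_assoc _ _ _
    _ = a*(b*b) := rbab h3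

theorem c_bb_a {a b : R} (h1 : Commute (b*a) b) (h3 : Commute (a*b) b) :
    Commute (b*b) a := by
  show (b*b)*a = a*(b*b)
  calc (b*b)*a = b*(b*a) := mul_assoc _ _ _
    _ = a*(b*b) := rbba h1 h3

theorem pb_a {a b : R} (h2 : Commute (b*a) a) (h4 : Commute (a*b) a) :
    ∀ k : ℕ, b * a ^ (k+2) = a ^ (k+2) * b := by
  intro k
  induction k with
  | zero =>
      have e : b*(a*a) = (a*a)*b := by
        rw [rbaa h2 h4, ← mul_assoc]
      calc b * a ^ (0+2) = b * (a*a) := by rw [pow_two]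
        _ = (a*a)*b := e
        _ = a ^ (0+2) * b := by rw [← pow_two]
  | succ k ih =>
      have e1 : a ^ (k+1+2) = a ^ (k+2) * a := pow_succ a (k+2)
      calc b * a ^ (k+1+2) = b * (a ^ (k+2) * a) := by rw [e1]
        _ = (b * a ^ (k+2)) * a := (mul_assoc _ _ _).symm
        _ = (a ^ (k+2) * b) * a := by rw [ih]
        _ = ((a ^ (k+1) * a) * b) * a := by rw [pow_succ]
        _ = (a ^ (k+1) * (a * b)) * a := by rw [mul_assoc (a ^ (k+1)) a b]
        _ = a ^ (k+1) * ((a * b) * a) := mul_assoc _ _ _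
        _ = a ^ (k+1) * (a * (a * b)) := by rw [h4.eq]
        _ = a ^ (k+1) * ((a * a) * b) := by rw [mul_assoc a a b]
        _ = (a ^ (k+1) * (a * a)) * b := (mul_assoc _ _ _).symm
        _ = a ^ (k+1+2) * b := by rw [← pow_two, ← pow_add]

theorem pows_comm {a b : R} (h1 : Commute (b*a) b) (h2 : Commute (b*a) a)
    (h3 : Commute (a*b) b) (h4 : Commute (a*b) a) :
    ∀ i j : ℕ, 1 ≤ i → 1 ≤ j → 3 ≤ i + j → a ^ i * b ^ j = b ^ j * a ^ i := by
  intro i j hi hj hij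
  rcases Nat.lt_or_ge i 2 with hi2 | hi2
  · -- i = 1, j ≥ 2
    obtain rfl : i = 1 := by omega
    obtain ⟨l, rfl⟩ : ∃ l, j = l + 2 := ⟨j - 2, by omega⟩
    rw [pow_one]
    exact pb_a h3 h1 l
  · obtain ⟨i', rfl⟩ : ∃ i', i = i' + 2 := ⟨i - 2, by omega⟩
    clear hij hi
    induction j, hj using Nat.le_induction with
    | base =>
        rw [pow_one]
        exact (pb_a h2 h4 i').symm
    | succ j hj ih =>
        calc a ^ (i'+2) * b ^ (j+1) = a ^ (i'+2) * (b ^ j * b) := by rw [pow_succ b j]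
          _ = (a ^ (i'+2) * b ^ j) * b := (mul_assoc _ _ _).symm
          _ = (b ^ j * a ^ (i'+2)) * b := by rw [ih]
          _ = b ^ j * (a ^ (i'+2) * b) := mul_assoc _ _ _
          _ = b ^ j * (b * a ^ (i'+2)) := by rw [← pb_a h2 h4 i']
          _ = (b ^ j * b) * a ^ (i'+2) := (mul_assoc _ _ _).symm
          _ = b ^ (j+1) * a ^ (i'+2) := by rw [← pow_succ b j]

theorem shift_h1 {a b : R} (h1 : Commute (b*a) b) : Commute (b*(a+b)) b := by
  rw [mul_add]
  exact h1.add_left ((Commute.refl b).mul_left (Commute.refl b))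

theorem shift_h2 {a b : R} (h1 : Commute (b*a) b) (h2 : Commute (b*a) a)
    (h3 : Commute (a*b) b) : Commute (b*(a+b)) (a+b) := by
  rw [mul_add]
  exact (h2.add_right h1).add_left
    ((c_bb_a h1 h3).add_right ((Commute.refl b).mul_left (Commute.refl b)))

theorem shift_h3 {a b : R} (h3 : Commute (a*b) b) : Commute ((a+b)*b) b := by
  rw [add_mul]
  exact h3.add_left ((Commute.refl b).mul_left (Commute.refl b))

theorem shift_h4 {a b : R} (h1 : Commute (b*a) b) (h3 : Commute (a*b) b)
    (h4 : Commute (a*b) a) : Commute ((a+b)*b) (a+b) := by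
  rw [add_mul]
  exact (h4.add_right h3).add_left
    ((c_bb_a h1 h3).add_right ((Commute.refl b).mul_left (Commute.refl b)))

theorem add_pow_mem {a b : R} (h1 : Commute (b*a) b) (h2 : Commute (b*a) a)
    (h3 : Commute (a*b) b) (h4 : Commute (a*b) a) :
    ∀ n : ℕ, 3 ≤ n → (a+b) ^ n ∈ AddSubmonoid.closure (Words a b n) := by
  intro n hn
  induction n, hn using Nat.le_induction with
  | base =>
      have e3 : (a+b)^3 = a*(a*a) + a*(a*b) + a*(b*a) + a*(b*b) + b*(a*a) + b*(a*b)
          + b*(b*a) + b*(b*b) := by noncomm_ring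
      rw [raba h4, rbaa h2 h4, rbab h3, rbba h1 h3] at e3
      rw [e3]
      have w30 : a*(a*a) ∈ Words a b 3 := ⟨3, 0, rfl, by noncomm_ring⟩
      have w21 : a*(a*b) ∈ Words a b 3 := ⟨2, 1, rfl, by noncomm_ring⟩
      have w12 : a*(b*b) ∈ Words a b 3 := ⟨1, 2, rfl, by noncomm_ring⟩
      have w03 : b*(b*b) ∈ Words a b 3 := ⟨0, 3, rfl, by noncomm_ring⟩
      exact add_mem (add_mem (add_mem (add_mem (add_mem (add_mem (add_mem
        (AddSubmonoid.subset_closure w30) (AddSubmonoid.subset_closure w21))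
        (AddSubmonoid.subset_closure w21)) (AddSubmonoid.subset_closure w12))
        (AddSubmonoid.subset_closure w21)) (AddSubmonoid.subset_closure w12))
        (AddSubmonoid.subset_closure w12)) (AddSubmonoid.subset_closure w03)
  | succ n hn ih =>
      have e : (a+b)^(n+1) = (a+b) * (a+b)^n := pow_succ' _ _
      rw [e]
      have key : ∀ g, g ∈ AddSubmonoid.closure (Words a b n) →
          (a+b) * g ∈ AddSubmonoid.closure (Words a b (n+1)) := by
        intro g hg
        induction hg using AddSubmonoid.closure_induction with
        | mem g hg =>
          obtain ⟨i, j, hij, rfl⟩ := hg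
          have ea : a * (a ^ i * b ^ j) = a ^ (i+1) * b ^ j := by
            rw [← mul_assoc, ← pow_succ']
          have hb : b * (a ^ i * b ^ j) ∈ AddSubmonoid.closure (Words a b (n+1)) := by
            match i, hij with
            | 0, hij =>
                refine AddSubmonoid.subset_closure ⟨0, j+1, by omega, ?_⟩
                simp [pow_succ', mul_assoc]
            | 1, hij =>
                obtain ⟨l, rfl⟩ : ∃ l, j = l + 2 := ⟨j - 2, by omega⟩
                refine AddSubmonoid.subset_closure ⟨1, l+3, by omega, ?_⟩
                simp only [pow_one]
                calc b * (a * b ^ (l+2)) = b * (b ^ (l+2) * a) := by rw [pb_a h3 h1 l]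
                  _ = (b * b ^ (l+2)) * a := (mul_assoc _ _ _).symm
                  _ = b ^ (l+3) * a := by rw [← pow_succ']
                  _ = a * b ^ (l+3) := (pb_a h3 h1 (l+1)).symm
            | (i'+2), hij =>
                refine AddSubmonoid.subset_closure ⟨i'+2, j+1, by omega, ?_⟩
                calc b * (a ^ (i'+2) * b ^ j) = (b * a ^ (i'+2)) * b ^ j :=
                      (mul_assoc _ _ _).symm
                  _ = (a ^ (i'+2) * b) * b ^ j := by rw [pb_a h2 h4 i']
                  _ = a ^ (i'+2) * (b * b ^ j) := mul_assoc _ _ _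
                  _ = a ^ (i'+2) * b ^ (j+1) := by rw [← pow_succ']
          rw [add_mul]
          refine add_mem ?_ hb
          rw [ea]
          exact AddSubmonoid.subset_closure ⟨i+1, j, by omega, rfl⟩
        | zero => rw [mul_zero]; exact zero_mem _
        | add g g' hg hg' ihg ihg' =>
          rw [mul_add]
          exact add_mem ihg ihg'
      exact key _ ih

end FAP

theorem finite_ascent_perturbation {X : Type*} [NormedAddCommGroup X] [NormedSpace ℂ X]
    [CompleteSpace X] (T F : X →L[ℂ] X)
    (hp : ∃ n : ℕ, LinearMap.ker ((T ^ n : X →L[ℂ] X) : X →ₗ[ℂ] X) =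
      LinearMap.ker ((T ^ (n + 1) : X →L[ℂ] X) : X →ₗ[ℂ] X))
    (hF : ∃ m : ℕ, 1 ≤ m ∧ FiniteDimensional ℂ (LinearMap.range ((F ^ m : X →L[ℂ] X) : X →ₗ[ℂ] X)))
    (h1 : Commute (F * T) F) (h2 : Commute (F * T) T)
    (h3 : Commute (T * F) F) (h4 : Commute (T * F) T) :
    ∃ n : ℕ, LinearMap.ker (((T + F) ^ n : X →L[ℂ] X) : X →ₗ[ℂ] X) =
      LinearMap.ker (((T + F) ^ (n + 1) : X →L[ℂ] X) : X →ₗ[ℂ] X) := by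
  classical
  obtain ⟨p, hpk⟩ := hp
  obtain ⟨m₀, hm₀, hFfd⟩ := hF
  haveI := hFfd
  have happ : ∀ (f g : X →L[ℂ] X) (x : X), (f * g) x = f (g x) := fun _ _ _ => rfl
  set S : X →L[ℂ] X := T + F with hSdef
  set m : ℕ := m₀ + 3 with hmdef
  have hm3 : 3 ≤ m := by omega
  -- kernel stabilization for T
  have hdownaux : ∀ (k : ℕ) (x : X), (T ^ (p + k)) x = 0 → (T ^ p) x = 0 := by
    intro k
    induction k with
    | zero => intro x hx; simpa using hx
    | succ k ih =>
        intro x hx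
        have e : T ^ (p + (k+1)) = T ^ (p+1) * T ^ k := by
          rw [← pow_add]; congr 1; omega
        rw [e, happ] at hx
        have hmem : (T ^ k) x ∈ LinearMap.ker ((T ^ (p+1) : X →L[ℂ] X) : X →ₗ[ℂ] X) := LinearMap.mem_ker.2 hx
        rw [← hpk] at hmem
        have hpk0 : (T ^ p) ((T ^ k) x) = 0 := LinearMap.mem_ker.1 hmem
        have hx2 : (T ^ (p + k)) x = 0 := by rw [pow_add, happ]; exact hpk0
        exact ih x hx2
  have hdown : ∀ (n : ℕ) (x : X), p ≤ n → (T ^ n) x = 0 → (T ^ p) x = 0 := by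
    intro n x hn hx
    have e : p + (n - p) = n := by omega
    exact hdownaux (n - p) x (by rw [e]; exact hx)
  -- M and invariances
  set M : Submodule ℂ X := LinearMap.range ((F ^ m : X →L[ℂ] X) : X →ₗ[ℂ] X) with hMdef
  have hMfd : FiniteDimensional ℂ M := by
    have hle : M ≤ LinearMap.range ((F ^ m₀ : X →L[ℂ] X) : X →ₗ[ℂ] X) := by
      intro v hv
      obtain ⟨y, rfl⟩ := LinearMap.mem_range.1 hv
      refine LinearMap.mem_range.2 ⟨(F ^ 3) y, ?_⟩
      show (F ^ m₀) ((F ^ 3) y) = (F ^ m) y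
      rw [← happ, ← pow_add, hmdef]
    exact Submodule.finiteDimensional_of_le hle
  haveI := hMfd
  have hFm_mem : ∀ y : X, (F ^ m) y ∈ M := fun y => LinearMap.mem_range.2 ⟨y, rfl⟩
  have hTFm : T * F ^ m = F ^ m * T := by
    have := FAP.pows_comm h1 h2 h3 h4 1 m (by omega) (by omega) (by omega)
    simpa [pow_one] using this
  have hFFm : F * F ^ m = F ^ m * F := by rw [← pow_succ']; exact pow_succ F m
  have hMT : ∀ v ∈ M, T v ∈ M := by
    intro v hv
    obtain ⟨y, rfl⟩ := LinearMap.mem_range.1 hv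
    refine LinearMap.mem_range.2 ⟨T y, ?_⟩
    show (F ^ m) (T y) = T ((F ^ m) y)
    rw [← happ, ← hTFm, happ]
  have hMF : ∀ v ∈ M, F v ∈ M := by
    intro v hv
    obtain ⟨y, rfl⟩ := LinearMap.mem_range.1 hv
    refine LinearMap.mem_range.2 ⟨F y, ?_⟩
    show (F ^ m) (F y) = F ((F ^ m) y)
    rw [← happ, ← hFFm, happ]
  have hMS : ∀ v ∈ M, S v ∈ M := by
    intro v hv
    rw [hSdef, ContinuousLinearMap.add_apply]
    exact M.add_mem (hMT v hv) (hMF v hv)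
  have hMTi : ∀ (i : ℕ), ∀ v ∈ M, (T ^ i) v ∈ M := by
    intro i
    induction i with
    | zero => intro v hv; simpa using hv
    | succ i ih => intro v hv; rw [pow_succ, happ]; exact ih _ (hMT v hv)
  have hMFi : ∀ (i : ℕ), ∀ v ∈ M, (F ^ i) v ∈ M := by
    intro i
    induction i with
    | zero => intro v hv; simpa using hv
    | succ i ih => intro v hv; rw [pow_succ, happ]; exact ih _ (hMF v hv)
  have hMSi : ∀ (i : ℕ), ∀ v ∈ M, (S ^ i) v ∈ M := by
    intro i
    induction i with
    | zero => intro v hv; simpa using hv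
    | succ i ih => intro v hv; rw [pow_succ, happ]; exact ih _ (hMS v hv)
  have hFjM : ∀ (j : ℕ), m ≤ j → ∀ x : X, (F ^ j) x ∈ M := by
    intro j hj x
    have e : F ^ j = F ^ m * F ^ (j - m) := by rw [← pow_add]; congr 1; omega
    rw [e, happ]; exact hFm_mem _
  have hnegF : ∀ (j : ℕ) (v : X), (F ^ j) v ∈ M → ((-F) ^ j) v ∈ M := by
    intro j v hv
    rcases Nat.even_or_odd j with hje | hjo
    · rw [hje.neg_pow]; exact hv
    · rw [hjo.neg_pow, ContinuousLinearMap.neg_apply]; exact M.neg_mem hv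
  -- decreasing chain D i = T^i(M), stable part M₁
  set Dc : ℕ → Submodule ℂ X := fun i => Submodule.map ((T ^ i : X →L[ℂ] X) : X →ₗ[ℂ] X) M with hDc
  have hDmem : ∀ (i : ℕ) (v : X), v ∈ Dc i ↔ ∃ w ∈ M, (T ^ i) w = v := by
    intro i v; exact Submodule.mem_map
  have hDle : ∀ i, Dc i ≤ M := by
    intro i v hv
    obtain ⟨w, hw, rfl⟩ := (hDmem i v).1 hv
    exact hMTi i w hw
  have hDanti : ∀ i k, Dc (i + k) ≤ Dc i := by
    intro i k
    induction k with
    | zero => exact le_of_eq (by rw [Nat.add_zero])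
    | succ k ih =>
        refine le_trans ?_ ih
        intro v hv
        obtain ⟨w, hw, rfl⟩ := (hDmem _ v).1 hv
        refine (hDmem _ _).2 ⟨T w, hMT w hw, ?_⟩
        rw [← happ, ← pow_succ]
        rfl
  have hDfd : ∀ i, FiniteDimensional ℂ (Dc i) := fun i =>
    Submodule.finiteDimensional_of_le (hDle i)
  obtain ⟨s, hsD⟩ : ∃ s, ∀ i, s ≤ i → Dc i = Dc s := by
    have hne : (Set.range (fun i => Module.finrank ℂ (Dc i))).Nonempty := ⟨_, ⟨0, rfl⟩⟩
    obtain ⟨s, hs⟩ := Nat.sInf_mem hne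
    simp only at hs
    refine ⟨s, fun i hi => ?_⟩
    have hle' : Dc i ≤ Dc s := by
      have e : s + (i - s) = i := by omega
      rw [← e]; exact hDanti s (i - s)
    haveI := hDfd s
    refine Submodule.eq_of_le_of_finrank_le hle' ?_
    rw [hs]
    exact Nat.sInf_le ⟨i, rfl⟩
  set M₁ : Submodule ℂ X := Dc s with hM₁def
  have hM₁M : M₁ ≤ M := hDle s
  have hM₁T : ∀ v ∈ M₁, T v ∈ M₁ := by
    intro v hv
    obtain ⟨w, hw, rfl⟩ := (hDmem s v).1 hv
    have e : T ((T ^ s) w) = (T ^ (s+1)) w := by rw [← happ, ← pow_succ']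
    rw [e, ← hsD (s+1) (by omega)]
    exact (hDmem _ _).2 ⟨w, hw, rfl⟩
  have hM₁Ti : ∀ (i : ℕ), ∀ v ∈ M₁, (T ^ i) v ∈ M₁ := by
    intro i
    induction i with
    | zero => intro v hv; simpa using hv
    | succ i ih => intro v hv; rw [pow_succ, happ]; exact ih _ (hM₁T v hv)
  have hM₁surj : ∀ v ∈ M₁, ∃ u ∈ M₁, T u = v := by
    intro v hv
    rw [← hsD (s+1) (by omega)] at hv
    obtain ⟨w, hw, rfl⟩ := (hDmem _ v).1 hv
    refine ⟨(T ^ s) w, (hDmem s _).2 ⟨w, hw, rfl⟩, ?_⟩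
    rw [← happ, ← pow_succ']
  have hM₁surjR : ∀ (j : ℕ), ∀ v ∈ M₁, ∃ u ∈ M₁, (T ^ j) u = v := by
    intro j
    induction j with
    | zero => intro v hv; exact ⟨v, hv, by simp⟩
    | succ j ih =>
        intro v hv
        obtain ⟨u₁, hu₁, hu₁v⟩ := hM₁surj v hv
        obtain ⟨u, hu, huu⟩ := ih u₁ hu₁
        exact ⟨u, hu, by rw [pow_succ', happ, huu, hu₁v]⟩
  have hdecomp : ∀ v ∈ M, ∃ u ∈ M₁, (T ^ p) (v - u) = 0 := by
    intro v hv
    have h1v : (T ^ (s + p)) v ∈ M₁ := by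
      rw [← hsD (s + p) (by omega)]
      exact (hDmem _ _).2 ⟨v, hv, rfl⟩
    obtain ⟨u, hu, huv⟩ := hM₁surjR (s + p) _ h1v
    refine ⟨u, hu, ?_⟩
    have h0 : (T ^ (s + p)) (v - u) = 0 := by
      rw [map_sub, huv, sub_self]
    exact hdown (s + p) (v - u) (by omega) h0
  have hTpT : ∀ z : X, (T ^ p) (T z) = T ((T ^ p) z) := by
    intro z
    show (T ^ p * T) z = (T * T ^ p) z
    rw [← pow_succ, ← pow_succ']
  have keup : ∀ (n : ℕ) (x : X), (∃ u ∈ M₁, (T ^ p) ((T ^ n) x - u) = 0) →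
      (∃ u ∈ M₁, (T ^ p) ((T ^ (n+1)) x - u) = 0) := by
    rintro n x ⟨u, hu, h0⟩
    refine ⟨T u, hM₁T u hu, ?_⟩
    have e : (T ^ (n+1)) x - T u = T ((T ^ n) x - u) := by
      rw [map_sub]
      congr 1
      rw [← happ, ← pow_succ']
    rw [e, hTpT, h0, map_zero]
  have kedown : ∀ (n : ℕ), p ≤ n → ∀ (x : X),
      (∃ u ∈ M₁, (T ^ p) ((T ^ (n+1)) x - u) = 0) →
      (∃ u ∈ M₁, (T ^ p) ((T ^ n) x - u) = 0) := by
    rintro n hn x ⟨u, hu, h0⟩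
    obtain ⟨u', hu', hTu'⟩ := hM₁surj u hu
    refine ⟨u', hu', ?_⟩
    have e : (T ^ (p+1)) ((T ^ n) x - u') = (T ^ p) ((T ^ (n+1)) x - u) := by
      rw [pow_succ, happ]
      congr 1
      rw [map_sub, hTu']
      congr 1
      rw [← happ, ← pow_succ']
    have h01 : (T ^ (p+1)) ((T ^ n) x - u') = 0 := by rw [e]; exact h0
    exact hdown (p+1) _ (by omega) h01
  have kedownaux : ∀ (k : ℕ) (x : X),
      (∃ u ∈ M₁, (T ^ p) ((T ^ (p + k)) x - u) = 0) →
      (∃ u ∈ M₁, (T ^ p) ((T ^ p) x - u) = 0) := by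
    intro k
    induction k with
    | zero => intro x hx; simpa using hx
    | succ k ih =>
        intro x hx
        exact ih x (kedown (p + k) (by omega) x hx)
  have hKstab1 : ∀ (n : ℕ) (x : X), p ≤ n → (T ^ n) x ∈ M → (T ^ (p + p)) x ∈ M := by
    intro n x hn hx
    have ke_n : ∃ u ∈ M₁, (T ^ p) ((T ^ n) x - u) = 0 := hdecomp _ hx
    have ke_p : ∃ u ∈ M₁, (T ^ p) ((T ^ p) x - u) = 0 := by
      have e : p + (n - p) = n := by omega
      exact kedownaux (n - p) x (by rw [e]; exact ke_n)
    obtain ⟨u, hu, h0⟩ := ke_p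
    have e2 : (T ^ (p + p)) x = (T ^ p) ((T ^ p) x) := by rw [pow_add, happ]
    have e3 : (T ^ p) ((T ^ p) x) = (T ^ p) ((T ^ p) x - u) + (T ^ p) u := by
      rw [← map_add, sub_add_cancel]
    rw [e2, e3, h0, zero_add]
    exact hM₁M (hM₁Ti p u hu)
  set q : ℕ := p + p with hqdef
  have hKup : ∀ (n : ℕ) (x : X), (T ^ n) x ∈ M → (T ^ (n+1)) x ∈ M := by
    intro n x hx
    have e : (T ^ (n+1)) x = T ((T ^ n) x) := by rw [← happ, ← pow_succ']
    rw [e]; exact hMT _ hx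
  have hKupGE : ∀ (n n' : ℕ) (x : X), n ≤ n' → (T ^ n) x ∈ M → (T ^ n') x ∈ M := by
    intro n n' x hnn hx
    obtain ⟨k, rfl⟩ : ∃ k, n' = n + k := ⟨n' - n, by omega⟩
    clear hnn
    induction k with
    | zero => exact hx
    | succ k ih => exact hKup (n + k) x ih
  have hKq : ∀ (n : ℕ) (x : X), p ≤ n → (T ^ n) x ∈ M →
      ∀ n', q ≤ n' → (T ^ n') x ∈ M := by
    intro n x hn hx n' hn'
    exact hKupGE q n' x hn' (hKstab1 n x hn hx)
  -- relations for (S, F) and (S, -F)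
  have hs1 : Commute (F * S) F := by rw [hSdef]; exact FAP.shift_h1 h1
  have hs2 : Commute (F * S) S := by rw [hSdef]; exact FAP.shift_h2 h1 h2 h3
  have hs3 : Commute (S * F) F := by rw [hSdef]; exact FAP.shift_h3 h3
  have hs4 : Commute (S * F) S := by rw [hSdef]; exact FAP.shift_h4 h1 h3 h4
  have hn1 : Commute ((-F) * S) (-F) := by rw [neg_mul]; exact hs1.neg_left.neg_right
  have hn2 : Commute ((-F) * S) S := by rw [neg_mul]; exact hs2.neg_left
  have hn3 : Commute (S * (-F)) (-F) := by rw [mul_neg]; exact hs3.neg_left.neg_right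
  have hn4 : Commute (S * (-F)) S := by rw [mul_neg]; exact hs4.neg_left
  have pcTF := FAP.pows_comm h1 h2 h3 h4
  have pcSF := FAP.pows_comm hn1 hn2 hn3 hn4
  -- direction (b) : K_q ⊆ L_n for n ≥ q + m
  have hword_TF : ∀ (n : ℕ) (x : X), q + m ≤ n → (∀ i, q ≤ i → (T ^ i) x ∈ M) →
      (S ^ n) x ∈ M := by
    intro n x hn hx
    have hcl : (T + F) ^ n ∈ AddSubmonoid.closure (FAP.Words T F n) :=
      FAP.add_pow_mem h1 h2 h3 h4 n (by omega)
    rw [← hSdef] at hcl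
    have key : ∀ g, g ∈ AddSubmonoid.closure (FAP.Words T F n) → g x ∈ M := by
      intro g hg
      induction hg using AddSubmonoid.closure_induction with
      | mem w hw =>
          obtain ⟨i, j, hij, rfl⟩ := hw
          rcases Nat.lt_or_ge j 1 with hj0 | hj1
          · obtain rfl : j = 0 := by omega
            have e : T ^ i * F ^ 0 = T ^ i := by rw [pow_zero, mul_one]
            rw [e]; exact hx i (by omega)
          · rcases Nat.lt_or_ge j m with hjm | hjm
            · rw [pcTF i j (by omega) (by omega) (by omega), happ]
              exact hMFi j _ (hx i (by omega))
            · rw [happ]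
              exact hMTi i _ (hFjM j hjm x)
      | zero => rw [ContinuousLinearMap.zero_apply]; exact M.zero_mem
      | add g g' hg hg' ihg ihg' =>
          rw [ContinuousLinearMap.add_apply]; exact M.add_mem ihg ihg'
    exact key _ hcl
  -- direction (a) : L_n ⊆ K_{n+m}
  have ha_dir : ∀ (n : ℕ) (x : X), 1 ≤ n → (S ^ n) x ∈ M → (T ^ (n + m)) x ∈ M := by
    intro n x hn hSx
    have hTs : T = S + (-F) := by rw [hSdef]; exact (add_neg_cancel_right T F).symm
    have hcl : (S + (-F)) ^ (n + m) ∈ AddSubmonoid.closure (FAP.Words S (-F) (n + m)) :=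
      FAP.add_pow_mem hn1 hn2 hn3 hn4 (n + m) (by omega)
    rw [← hTs] at hcl
    have key : ∀ g, g ∈ AddSubmonoid.closure (FAP.Words S (-F) (n + m)) → g x ∈ M := by
      intro g hg
      induction hg using AddSubmonoid.closure_induction with
      | mem w hw =>
          obtain ⟨i, j, hij, rfl⟩ := hw
          rcases Nat.lt_or_ge j 1 with hj0 | hj1
          · obtain rfl : j = 0 := by omega
            have e : S ^ i * (-F) ^ 0 = S ^ (i - n) * S ^ n := by
              rw [pow_zero, mul_one, ← pow_add]; congr 1; omega
            rw [e, happ]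
            exact hMSi _ _ hSx
          · rcases Nat.lt_or_ge j m with hjm | hjm
            · rw [pcSF i j (by omega) (by omega) (by omega), happ]
              have eS : (S ^ i) x = (S ^ (i - n)) ((S ^ n) x) := by
                rw [← happ, ← pow_add]
                congr 2
                omega
              rw [eS]
              exact hnegF j _ (hMFi j _ (hMSi (i - n) _ hSx))
            · rw [happ]
              exact hMSi i _ (hnegF j x (hFjM j hjm x))
      | zero => rw [ContinuousLinearMap.zero_apply]; exact M.zero_mem
      | add g g' hg hg' ihg ihg' =>
          rw [ContinuousLinearMap.add_apply]; exact M.add_mem ihg ihg'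
    exact key _ hcl
  set r : ℕ := q + m with hrdef
  have hLK : ∀ (n : ℕ) (x : X), r ≤ n → (S ^ n) x ∈ M →
      ∀ n', q ≤ n' → (T ^ n') x ∈ M := by
    intro n x hn hSx n' hn'
    have hTnm : (T ^ (n + m)) x ∈ M := ha_dir n x (by omega) hSx
    exact hKq (n + m) x (by omega) hTnm n' hn'
  have hkerS_mono : ∀ n : ℕ, LinearMap.ker ((S ^ n : X →L[ℂ] X) : X →ₗ[ℂ] X) ≤
      LinearMap.ker ((S ^ (n+1) : X →L[ℂ] X) : X →ₗ[ℂ] X) := by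
    intro n x hx
    rw [LinearMap.mem_ker] at hx ⊢
    change (S ^ n) x = 0 at hx
    change (S ^ (n+1)) x = 0
    rw [pow_succ', happ, hx, map_zero]
  have hkerS_monoGE : ∀ n n' : ℕ, n ≤ n' →
      LinearMap.ker ((S ^ n : X →L[ℂ] X) : X →ₗ[ℂ] X) ≤
        LinearMap.ker ((S ^ n' : X →L[ℂ] X) : X →ₗ[ℂ] X) := by
    intro n n' hnn
    obtain ⟨k, rfl⟩ : ∃ k, n' = n + k := ⟨n' - n, by omega⟩
    clear hnn
    induction k with
    | zero => exact le_refl _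
    | succ k ih => exact le_trans ih (hkerS_mono (n + k))
  have hkerSrM : ∀ (n : ℕ) (x : X), r ≤ n → (S ^ n) x = 0 → (S ^ r) x ∈ M := by
    intro n x hn h0
    have hSnM : (S ^ n) x ∈ M := by rw [h0]; exact M.zero_mem
    exact hword_TF r x (by omega) (fun i hi => hLK n x hn hSnM i hi)
  set Wc : ℕ → Submodule ℂ X := fun n => Submodule.map ((S ^ r : X →L[ℂ] X) : X →ₗ[ℂ] X) (LinearMap.ker ((S ^ n : X →L[ℂ] X) : X →ₗ[ℂ] X))
    with hWc
  have hWle : ∀ n, r ≤ n → Wc n ≤ M := by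
    intro n hn v hv
    obtain ⟨w, hw, rfl⟩ := Submodule.mem_map.1 hv
    exact hkerSrM n w hn (LinearMap.mem_ker.1 hw)
  have hWmono : ∀ n, Wc n ≤ Wc (n+1) := fun n => Submodule.map_mono (hkerS_mono n)
  have hWfd : ∀ n, r ≤ n → FiniteDimensional ℂ (Wc n) := fun n hn =>
    Submodule.finiteDimensional_of_le (hWle n hn)
  obtain ⟨k, hk⟩ : ∃ k : ℕ,
      Module.finrank ℂ (Wc (r + k)) = Module.finrank ℂ (Wc (r + k + 1)) := by
    by_contra hcon
    push_neg at hcon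
    have hlt : ∀ k, Module.finrank ℂ (Wc (r + k)) < Module.finrank ℂ (Wc (r + k + 1)) := by
      intro k
      haveI := hWfd (r + k + 1) (by omega)
      exact lt_of_le_of_ne (Submodule.finrank_mono (hWmono (r + k))) (hcon k)
    have hge : ∀ k, k ≤ Module.finrank ℂ (Wc (r + k)) := by
      intro k
      induction k with
      | zero => exact Nat.zero_le _
      | succ k ih =>
          have := hlt k
          show k + 1 ≤ Module.finrank ℂ (Wc (r + k + 1))
          omega
    have hub : ∀ k, Module.finrank ℂ (Wc (r + k)) ≤ Module.finrank ℂ M := by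
      intro k
      exact Submodule.finrank_mono (hWle (r + k) (by omega))
    have hA := hge (Module.finrank ℂ M + 1)
    have hB := hub (Module.finrank ℂ M + 1)
    omega
  haveI := hWfd (r + k + 1) (by omega)
  have hWeq : Wc (r + k) = Wc (r + k + 1) :=
    Submodule.eq_of_le_of_finrank_le (hWmono (r + k)) hk.ge
  refine ⟨r + k, le_antisymm (hkerS_mono (r + k)) ?_⟩
  intro x hx
  have hx0 : (S ^ (r + k + 1)) x = 0 := LinearMap.mem_ker.1 hx
  have hmem : (S ^ r) x ∈ Wc (r + k + 1) := Submodule.mem_map.2 ⟨x, hx, rfl⟩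
  rw [← hWeq] at hmem
  obtain ⟨y, hy, hyx⟩ := Submodule.mem_map.1 hmem
  have hxy : x - y ∈ LinearMap.ker ((S ^ (r + k) : X →L[ℂ] X) : X →ₗ[ℂ] X) := by
    have h0 : (S ^ r) (x - y) = 0 := by rw [map_sub, show (S ^ r) y = (S ^ r) x from hyx, sub_self]
    exact hkerS_monoGE r (r + k) (by omega) (LinearMap.mem_ker.2 h0)
  rw [LinearMap.mem_ker]
  calc (S ^ (r + k)) x = (S ^ (r + k)) y + (S ^ (r + k)) (x - y) := by
        rw [← map_add]; congr 1; abel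
    _ = 0 := by rw [show (S ^ (r + k)) y = 0 from LinearMap.mem_ker.1 hy,
          show (S ^ (r + k)) (x - y) = 0 from LinearMap.mem_ker.1 hxy, add_zero]
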